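/- Let m and k be integers with m ≥ 1, and suppose that one of the following three conditions holds: (A.1) k − m ≡ 0 (mod 3) and k − m ≥ 9; (A.2) k − m ≡ 1 (mod 3) and k − m ≥ 1; (A.3) k − m ≡ 2 (mod 3) and k − m ≥ 5. Then there exist integer vectors a = (a₁, a₂, a₃, a₄) ∈ ℤ⁴ and b = (b₁, …, b_{2m}) ∈ ℤ^{2m} such that every entry bⱼ belongs to {1, 3} (in particular every bⱼ is nonzero), the sum a₁ + a₂ + a₃ + a₄ + b₁ + ⋯ + b_{2m} is even, and 3·(a₁² + a₂² + a₃² + a₄²) + (b₁² + ⋯ + b_{2m}²) = 2k − 2. -/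
import Mathlib

private lemma sq_mod_two (a : ℕ) : a ^ 2 % 2 = a % 2 := by
  rcases Nat.even_or_odd a with ⟨c, hc⟩ | ⟨c, hc⟩ <;> subst hc <;> ring_nf <;> omega

private lemma key_4m (m : ℕ) (hm : 1 ≤ m) (k : ℤ) (x y : ℤ)
    (hx : x = 1 ∨ x = 3) (hy : y = 1 ∨ y = 3) (n : ℕ) (hn : n % 2 = 0)
    (heq : 3 * (n : ℤ) + (x ^ 2 + y ^ 2 + (2 * m - 2)) = 2 * k - 2) :
    ∃ (a : Fin 4 → ℤ) (b : Fin (2 * m) → ℤ),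
      (∀ j, b j = 1 ∨ b j = 3) ∧
      Even ((∑ i, a i) + ∑ j, b j) ∧
      3 * (∑ i, (a i) ^ 2) + (∑ j, (b j) ^ 2) = 2 * k - 2 := by
  obtain ⟨w, u, v, z, hsum⟩ := Nat.sum_four_squares n
  set c0 : Fin (2 * m) := ⟨0, by omega⟩ with hc0
  set c1 : Fin (2 * m) := ⟨1, by omega⟩ with hc1
  have hne : c0 ≠ c1 := by simp [hc0, hc1, Fin.ext_iff]
  refine ⟨![(w : ℤ), u, v, z],
    fun j => if j = c0 then x else if j = c1 then y else 1, ?_, ?_, ?_⟩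
  · intro j
    by_cases h0 : j = c0 <;> by_cases h1 : j = c1 <;> simp [h0, h1, hx, hy, hne.symm]
  · have hb : (∑ j : Fin (2 * m), (if j = c0 then x else if j = c1 then y else 1))
        = x + y + (2 * m - 2) := by
      have : ∀ j : Fin (2 * m),
          (if j = c0 then x else if j = c1 then y else 1)
          = (if j = c0 then x - 1 else 0) + (if j = c1 then y - 1 else 0) + 1 := by
        intro j
        by_cases h0 : j = c0 <;> by_cases h1 : j = c1 <;>
          simp_all [h0, h1]
      rw [Finset.sum_congr rfl fun j _ => this j]
      simp [Finset.sum_add_distrib, Finset.sum_ite_eq']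
      ring
    rw [hb, Fin.sum_univ_four]
    have hnat : (w + u + v + z) % 2 = 0 := by
      have h1 := sq_mod_two w
      have h2 := sq_mod_two u
      have h3 := sq_mod_two v
      have h4 := sq_mod_two z
      omega
    rw [Int.even_iff]
    rcases hx with hx | hx <;> rcases hy with hy | hy <;> subst hx hy <;>
      simp only [Matrix.cons_val_zero, Matrix.cons_val_one, Matrix.head_cons,
        Matrix.cons_val_two, Matrix.tail_cons, Matrix.cons_val_three] <;> omega
  · have hb : (∑ j : Fin (2 * m), (if j = c0 then x else if j = c1 then y else 1) ^ 2)
        = x ^ 2 + y ^ 2 + (2 * m - 2) := by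
      have : ∀ j : Fin (2 * m),
          (if j = c0 then x else if j = c1 then y else 1) ^ 2
          = (if j = c0 then x ^ 2 - 1 else 0) + (if j = c1 then y ^ 2 - 1 else 0) + 1 := by
        intro j
        by_cases h0 : j = c0 <;> by_cases h1 : j = c1 <;>
          simp_all [h0, h1]
      rw [Finset.sum_congr rfl fun j _ => this j]
      simp [Finset.sum_add_distrib, Finset.sum_ite_eq']
      ring
    rw [hb, Fin.sum_univ_four]
    have hcast : ((w : ℤ)) ^ 2 + (u : ℤ) ^ 2 + (v : ℤ) ^ 2 + (z : ℤ) ^ 2 = (n : ℤ) := by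
      exact_mod_cast congrArg (Nat.cast : ℕ → ℤ) hsum
    simp only [Matrix.cons_val_zero, Matrix.cons_val_one, Matrix.head_cons,
      Matrix.cons_val_two, Matrix.tail_cons, Matrix.cons_val_three]
    rw [hcast]
    linarith [heq]

/-- Solvability (dimension `4m` case): under the stated congruence and size
conditions on `k - m`, there exist `a ∈ ℤ⁴` and `b ∈ ℤ^{2m}` with all `bⱼ ∈ {1, 3}`,
`Σaᵢ + Σbⱼ` even, and `3‖a‖² + ‖b‖² = 2k - 2`. -/
theorem stringc_witten_index_exists_4m (m : ℕ) (hm : 1 ≤ m) (k : ℤ)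
    (h : ((k - (m : ℤ)) % 3 = 0 ∧ 9 ≤ k - (m : ℤ)) ∨
         ((k - (m : ℤ)) % 3 = 1 ∧ 1 ≤ k - (m : ℤ)) ∨
         ((k - (m : ℤ)) % 3 = 2 ∧ 5 ≤ k - (m : ℤ))) :
    ∃ (a : Fin 4 → ℤ) (b : Fin (2 * m) → ℤ),
      (∀ j, b j = 1 ∨ b j = 3) ∧
      Even ((∑ i, a i) + ∑ j, b j) ∧
      3 * (∑ i, (a i) ^ 2) + (∑ j, (b j) ^ 2) = 2 * k - 2 := by
  rcases h with ⟨h3, hge⟩ | ⟨h3, hge⟩ | ⟨h3, hge⟩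
  · -- d ≡ 0 mod 3, d ≥ 9 : x = y = 3, n = 2(d-9)/3
    obtain ⟨q, hq⟩ : ∃ q : ℤ, k - (m : ℤ) = 3 * q := ⟨(k - m) / 3, by omega⟩
    refine key_4m m hm k 3 3 (Or.inr rfl) (Or.inr rfl) (2 * q - 6).toNat (by omega) ?_
    have : ((2 * q - 6).toNat : ℤ) = 2 * q - 6 := Int.toNat_of_nonneg (by omega)
    rw [this]; push_cast; omega
  · obtain ⟨q, hq⟩ : ∃ q : ℤ, k - (m : ℤ) = 3 * q + 1 := ⟨(k - m) / 3, by omega⟩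
    refine key_4m m hm k 1 1 (Or.inl rfl) (Or.inl rfl) (2 * q).toNat (by omega) ?_
    have : ((2 * q).toNat : ℤ) = 2 * q := Int.toNat_of_nonneg (by omega)
    rw [this]; push_cast; omega
  · obtain ⟨q, hq⟩ : ∃ q : ℤ, k - (m : ℤ) = 3 * q + 2 := ⟨(k - m) / 3, by omega⟩
    refine key_4m m hm k 3 1 (Or.inr rfl) (Or.inl rfl) (2 * q - 2).toNat (by omega) ?_
    have : ((2 * q - 2).toNat : ℤ) = 2 * q - 2 := Int.toNat_of_nonneg (by omega)
    rw [this]; push_cast; omega
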